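/- Let n ≥ 13 be an integer and λ > 1 a real number, and let {A_k} and {B_k}, k = 0,…,n−1, be the vertices of the 2-concentric parallel regular n-gons with inner side length 1 and aspect ratio λ. Then for every Steiner minimal tree (V, G) for the terminal set T = {A_0,…,A_{n−1}} ∪ {B_0,…,B_{n−1}}, there is no Steiner point S ∈ V \ T such that S lies in the topological interior of the convex hull of {A_0,…,A_{n−1}} and S is adjacent in G to some outer vertex B_l. -/

import Mathlib

open Real EuclideanGeometry
open scoped Classical

noncomputable section

abbrev Pt : Type := EuclideanSpace ℝ (Fin 2)

/-- A Steiner network for a finite set `P` of points in the plane: a finite set `V` of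
points containing `P`, together with a connected simple graph on `V`. -/
structure SteinerNetwork (P : Finset Pt) where
  V : Finset Pt
  terminals_subset : P ⊆ V
  G : SimpleGraph V
  connected : G.Connected

/-- The total Euclidean length of a graph on a finite set of points in the plane. -/
noncomputable def graphLength {W : Finset Pt} (H : SimpleGraph W) : ℝ := by
  classical
  exact ∑ e ∈ H.edgeFinset,
    Sym2.lift ⟨fun (u v : W) => dist (u : Pt) (v : Pt), fun _ _ => dist_comm _ _⟩ e

/-- The length of a Steiner network. -/
noncomputable def SteinerNetwork.length {P : Finset Pt} (N : SteinerNetwork P) : ℝ :=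
  graphLength N.G

/-- The Steiner minimal length of a finite set of points in the plane. -/
noncomputable def steinerMinLength (P : Finset Pt) : ℝ :=
  sInf (Set.range fun N : SteinerNetwork P => N.length)

/-- A Steiner minimal tree for `P`: a Steiner network of minimal length which is
acyclic and in which every Steiner point (vertex not in `P`) has degree at least 3. -/
def IsSMT {P : Finset Pt} (N : SteinerNetwork P) : Prop :=
  N.length = steinerMinLength P ∧ N.G.IsAcyclic ∧
    ∀ v : N.V, (v : Pt) ∉ P → 3 ≤ (N.G.neighborSet v).ncard

/-- Vertex `A_k` of the inner regular `n`-gon of side length `1`. -/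
noncomputable def Apt (n : ℕ) (k : ℕ) : Pt :=
  (1 / (2 * Real.sin (π / n))) •
    (WithLp.toLp 2 ![Real.cos (2 * π * k / n), Real.sin (2 * π * k / n)] : Pt)

/-- Vertex `B_k = λ • A_k` of the outer regular `n`-gon of side length `λ`. -/
noncomputable def Bpt (n : ℕ) (lam : ℝ) (k : ℕ) : Pt := lam • Apt n k

/-- The terminal set: vertices of the 2-concentric parallel regular `n`-gons. -/
noncomputable def terminals (n : ℕ) (lam : ℝ) : Finset Pt :=
  (Finset.range n).image (Apt n) ∪ (Finset.range n).image (Bpt n lam)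

/-! ### Auxiliary lemmas -/

lemma norm_Apt (n : ℕ) (hn : 3 ≤ n) (k : ℕ) :
    ‖Apt n k‖ = 1 / (2 * Real.sin (π / n)) := by
  have hn0 : (0:ℝ) < n := by positivity
  have hs : 0 < Real.sin (π / n) := by
    apply Real.sin_pos_of_pos_of_lt_pi
    · positivity
    · calc π / n ≤ π / 3 := by
            apply div_le_div_of_nonneg_left pi_pos.le (by norm_num)
            exact_mod_cast hn
          _ < π := by linarith [pi_pos]
  rw [Apt, norm_smul]
  rw [EuclideanSpace.norm_eq]
  simp only [Fin.sum_univ_two, Real.norm_eq_abs, sq_abs]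
  rw [show (![Real.cos (2 * π * k / n), Real.sin (2 * π * k / n)] : Fin 2 → ℝ) 0 = Real.cos (2 * π * k / n) from rfl,
      show (![Real.cos (2 * π * k / n), Real.sin (2 * π * k / n)] : Fin 2 → ℝ) 1 = Real.sin (2 * π * k / n) from rfl]
  rw [add_comm, Real.sin_sq_add_cos_sq, Real.sqrt_one, mul_one, abs_of_pos (by positivity)]

lemma sin_pos_aux (n : ℕ) (hn : 3 ≤ n) : 0 < 1 / (2 * Real.sin (π / n)) := by
  have hn0 : (0:ℝ) < n := by positivity
  have hs : 0 < Real.sin (π / n) := by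
    apply Real.sin_pos_of_pos_of_lt_pi
    · positivity
    · calc π / n ≤ π / 3 := by
            apply div_le_div_of_nonneg_left pi_pos.le (by norm_num)
            exact_mod_cast hn
          _ < π := by linarith [pi_pos]
  positivity

section
variable {R lam : ℝ} {S A : Pt}

lemma key_b (hR : 0 < R) (hlam : 1 < lam) (hA : ‖A‖ = R) (hS : ‖S‖ ≤ R) :
    dist S A < dist S (lam • A) := by
  have h1 : dist S A ^ 2 < dist S (lam • A) ^ 2 := by
    rw [dist_eq_norm, dist_eq_norm, @norm_sub_sq_real, @norm_sub_sq_real]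
    rw [real_inner_smul_right, norm_smul, Real.norm_eq_abs, abs_of_pos (by linarith)]
    have hin : (inner ℝ S A : ℝ) ≤ R * R := le_trans (real_inner_le_norm S A)
      (by rw [hA]; nlinarith [norm_nonneg S])
    rw [hA, mul_pow]
    nlinarith [mul_le_mul_of_nonneg_left hin (by linarith : (0:ℝ) ≤ lam - 1),
      mul_pos (mul_pos (sub_pos.2 hlam) (sub_pos.2 hlam)) (mul_pos hR hR)]
  exact lt_of_pow_lt_pow_left₀ 2 dist_nonneg h1

lemma key_a (hR : 0 < R) (hlam : 1 < lam) (hA : ‖A‖ = R) (hS : ‖S‖ < R) :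
    dist A (lam • A) < dist S (lam • A) := by
  have h1 : dist A (lam • A) = (lam - 1) * R := by
    rw [dist_eq_norm, show A - lam • A = (1 - lam) • A by rw [sub_smul, one_smul],
      norm_smul, Real.norm_eq_abs, hA, abs_of_neg (by linarith)]
    ring
  have h2 : lam * R - ‖S‖ ≤ dist S (lam • A) := by
    rw [dist_eq_norm]
    have := norm_sub_norm_le (lam • A) S
    rw [norm_smul, Real.norm_eq_abs, abs_of_pos (by linarith), hA, norm_sub_rev] at this
    linarith
  rw [h1]; nlinarith

lemma norm_lt_of_interior (hR : 0 < R) {P : Finset Pt}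
    (hP : ∀ x ∈ P, ‖x‖ = R)
    (hS : S ∈ interior (convexHull ℝ (↑P : Set Pt))) : ‖S‖ < R := by
  have hsub : (convexHull ℝ (↑P : Set Pt)) ⊆ Metric.closedBall 0 R := by
    apply convexHull_min
    · intro x hx
      simp only [Metric.mem_closedBall, dist_zero_right]
      exact le_of_eq (hP x (by exact_mod_cast hx))
    · exact convex_closedBall 0 R
  have := interior_mono hsub hS
  rw [interior_closedBall 0 (ne_of_gt hR)] at this
  simpa [Metric.mem_ball, dist_zero_right] using this
end

lemma walk_dichotomy_aux {V : Type*} {G : SimpleGraph V} (S w : V) {u v : V} (p : G.Walk u v) :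
    (G.deleteEdges {s(S,w)}).Reachable u v ∨
    ((G.deleteEdges {s(S,w)}).Reachable u S ∨ (G.deleteEdges {s(S,w)}).Reachable u w) := by
  induction p with
  | nil => exact Or.inl (SimpleGraph.Reachable.refl _)
  | @cons a b c h p ih =>
    by_cases he : s(a, b) = s(S, w)
    · rcases Sym2.eq_iff.mp he with ⟨hv, -⟩ | ⟨hv, -⟩
      · subst hv; exact Or.inr (Or.inl (SimpleGraph.Reachable.refl _))
      · subst hv; exact Or.inr (Or.inr (SimpleGraph.Reachable.refl _))
    · have hadj : (G.deleteEdges {s(S,w)}).Adj a b := by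
        rw [SimpleGraph.deleteEdges_adj]
        exact ⟨h, by simpa using he⟩
      rcases ih with h1 | h1 | h1
      · exact Or.inl (hadj.reachable.trans h1)
      · exact Or.inr (Or.inl (hadj.reachable.trans h1))
      · exact Or.inr (Or.inr (hadj.reachable.trans h1))

lemma walk_dichotomy {V : Type*} {G : SimpleGraph V} (S w : V) {v : V} (p : G.Walk v S) :
    (G.deleteEdges {s(S,w)}).Reachable v S ∨ (G.deleteEdges {s(S,w)}).Reachable v w := by
  rcases walk_dichotomy_aux S w p with h | h | h
  · exact Or.inl h
  · exact Or.inl h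
  · exact Or.inr h

lemma sum_edge_eq {W : Finset Pt} (H : SimpleGraph W) (i1 i2 : Fintype H.edgeSet)
    (g : Sym2 W → ℝ) :
    ∑ e ∈ @SimpleGraph.edgeFinset _ H i1, g e = ∑ e ∈ @SimpleGraph.edgeFinset _ H i2, g e :=
  Finset.sum_congr
    (by ext e; simp only [SimpleGraph.edgeFinset, Set.mem_toFinset]) (fun _ _ => rfl)

lemma graphLength_eq {W : Finset Pt} (H : SimpleGraph W) (i : Fintype H.edgeSet) :
    graphLength H = ∑ e ∈ @SimpleGraph.edgeFinset _ H i,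
      Sym2.lift ⟨fun (u v : W) => dist (u : Pt) (v : Pt), fun _ _ => dist_comm _ _⟩ e := by
  unfold graphLength
  exact sum_edge_eq H _ i _

lemma graphLength_nonneg {W : Finset Pt} (H : SimpleGraph W) : 0 ≤ graphLength H := by
  unfold graphLength
  apply Finset.sum_nonneg
  intro e _
  induction e using Sym2.ind with
  | _ u v => simpa using dist_nonneg

lemma swap_lemma {P : Finset Pt} (N : SteinerNetwork P)
    (hlen : N.length = steinerMinLength P) (hac : N.G.IsAcyclic)
    (S w x y : N.V) (hadj : N.G.Adj S w) (hxy : x ≠ y)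
    (hne : s(x,y) ≠ s(S,w))
    (hrx : (N.G.deleteEdges {s(S,w)}).Reachable x S)
    (hry : (N.G.deleteEdges {s(S,w)}).Reachable y w)
    (hshort : dist (x:Pt) (y:Pt) < dist (S:Pt) (w:Pt)) : False := by
  classical
  set Gd := N.G.deleteEdges {s(S,w)} with hGd
  have hbr : ¬ Gd.Reachable S w := by
    have hb := (SimpleGraph.isAcyclic_iff_forall_adj_isBridge.mp hac) hadj
    exact SimpleGraph.isBridge_iff.mp hb
  have hnotadj : ¬ N.G.Adj x y := by
    intro h
    have hxyd : Gd.Adj x y := by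
      rw [hGd, SimpleGraph.deleteEdges_adj]
      exact ⟨h, by simpa using hne⟩
    exact hbr (hrx.symm.trans (hxyd.reachable.trans hry))
  set G' := Gd ⊔ SimpleGraph.fromEdgeSet {s(x,y)} with hG'
  have hxyG' : G'.Adj x y := by
    rw [hG', SimpleGraph.sup_adj, SimpleGraph.fromEdgeSet_adj]
    exact Or.inr ⟨rfl, hxy⟩
  have hGdle : Gd ≤ G' := le_sup_left
  have hwS : G'.Reachable w S :=
    ((hry.symm.mono hGdle).trans (hxyG'.symm.reachable)).trans (hrx.mono hGdle)
  have hAll : ∀ v : N.V, G'.Reachable v S := by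
    intro v
    obtain ⟨p⟩ := N.connected.preconnected v S
    rcases walk_dichotomy S w p with h | h
    · exact h.mono hGdle
    · exact (h.mono hGdle).trans hwS
  have hconn : G'.Connected := by
    have : Nonempty (↥N.V) := ⟨S⟩
    exact ⟨fun u v => (hAll u).trans (hAll v).symm⟩
  set N' : SteinerNetwork P := ⟨N.V, N.terminals_subset, G', hconn⟩ with hN'
  -- edge set computation
  have he0mem : s(S,w) ∈ N.G.edgeFinset := by
    rw [SimpleGraph.mem_edgeFinset, SimpleGraph.mem_edgeSet]; exact hadj
  have hedge : G'.edgeFinset = insert s(x,y) (N.G.edgeFinset.erase s(S,w)) := by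
    ext e
    simp only [SimpleGraph.mem_edgeFinset, Finset.mem_insert, Finset.mem_erase, hG',
      SimpleGraph.edgeSet_sup, Set.mem_union, hGd, SimpleGraph.edgeSet_deleteEdges,
      SimpleGraph.edgeSet_fromEdgeSet, Set.mem_diff, Set.mem_singleton_iff,
      Set.mem_setOf_eq, SimpleGraph.mem_edgeSet]
    constructor
    · rintro (⟨he, hne0⟩ | ⟨rfl, -⟩)
      · exact Or.inr ⟨hne0, he⟩
      · exact Or.inl rfl
    · rintro (rfl | ⟨hne0, he⟩)
      · exact Or.inr ⟨rfl, Sym2.mk_isDiag_iff.not.mpr hxy⟩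
      · exact Or.inl ⟨he, hne0⟩
  have he'notin : s(x,y) ∉ N.G.edgeFinset.erase s(S,w) := by
    intro h
    have h2 := Finset.mem_of_mem_erase h
    rw [SimpleGraph.mem_edgeFinset, SimpleGraph.mem_edgeSet] at h2
    exact hnotadj h2
  -- length computation
  set f : Sym2 N.V → ℝ :=
    Sym2.lift ⟨fun (u v : N.V) => dist (u : Pt) (v : Pt), fun _ _ => dist_comm _ _⟩ with hf
  have hlen' : N'.length = f s(x,y) + (N.length - f s(S,w)) := by
    have hG'len : N'.length = ∑ e ∈ G'.edgeFinset, f e := graphLength_eq G' _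
    have hGlen : N.length = ∑ e ∈ N.G.edgeFinset, f e := graphLength_eq N.G _
    rw [hG'len, hGlen, hedge, Finset.sum_insert he'notin, Finset.sum_erase_eq_sub he0mem]
  have hfxy : f s(x,y) = dist (x:Pt) (y:Pt) := rfl
  have hfSw : f s(S,w) = dist (S:Pt) (w:Pt) := rfl
  have hbdd : BddBelow (Set.range fun M : SteinerNetwork P => M.length) := by
    refine ⟨0, ?_⟩
    rintro r ⟨M, rfl⟩
    exact graphLength_nonneg M.G
  have hmin : steinerMinLength P ≤ N'.length := csInf_le hbdd ⟨N', rfl⟩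
  rw [hlen', hfxy, hfSw] at hmin
  rw [hlen] at *
  linarith

/-- For `n ≥ 13` and `λ > 1`, in any Steiner minimal tree for the vertices of
2-concentric parallel regular `n`-gons, no Steiner point lying in the interior of
the convex hull of the inner polygon is adjacent to an outer vertex `B_l`. -/
theorem no_inner_steiner_point_adjacent_to_outer (n : ℕ) (hn : 13 ≤ n)
    (lam : ℝ) (hlam : 1 < lam)
    (N : SteinerNetwork (terminals n lam)) (hN : IsSMT N) :
    ¬ ∃ (S w : N.V) (l : ℕ), (S : Pt) ∉ terminals n lam ∧
      (S : Pt) ∈ interior (convexHull ℝ (↑((Finset.range n).image (Apt n)) : Set Pt)) ∧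
      l < n ∧ (w : Pt) = Bpt n lam l ∧ N.G.Adj S w := by
  obtain ⟨hlen, hac, -⟩ := hN
  rintro ⟨S, w, l, hSterm, hSint, hl, hw, hadj⟩
  have hn3 : 3 ≤ n := by omega
  set R := 1 / (2 * Real.sin (π / n)) with hRdef
  have hR : 0 < R := sin_pos_aux n hn3
  have hAmem : Apt n l ∈ terminals n lam :=
    Finset.mem_union.2 (Or.inl (Finset.mem_image.2 ⟨l, Finset.mem_range.2 hl, rfl⟩))
  have hAV : Apt n l ∈ N.V := N.terminals_subset hAmem
  set a : N.V := ⟨Apt n l, hAV⟩ with ha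
  have hnormA : ‖(a : Pt)‖ = R := norm_Apt n hn3 l
  have hSnorm : ‖(S : Pt)‖ < R := by
    apply norm_lt_of_interior hR (P := (Finset.range n).image (Apt n)) _ hSint
    intro x hx
    obtain ⟨k, -, rfl⟩ := Finset.mem_image.mp hx
    exact norm_Apt n hn3 k
  have haS : a ≠ S := by
    intro h
    exact hSterm (h ▸ hAmem)
  have hA0 : (a : Pt) ≠ 0 := by
    intro h
    rw [h, norm_zero] at hnormA
    exact absurd hnormA.symm (ne_of_gt hR)
  have hwpt : (w : Pt) = lam • (a : Pt) := hw
  have haw : a ≠ w := by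
    intro h
    have h1 : (a : Pt) = lam • (a : Pt) := by
      conv_lhs => rw [h]
      exact hwpt
    have h2 : (lam - 1) • (a : Pt) = 0 := by
      rw [sub_smul, one_smul, ← h1, sub_self]
    rcases smul_eq_zero.mp h2 with h3 | h3
    · exact absurd h3 (by intro hh; linarith [sub_eq_zero.mp hh])
    · exact hA0 h3
  have hkey_a : dist (a : Pt) (w : Pt) < dist (S : Pt) (w : Pt) := by
    rw [hwpt]; exact key_a hR hlam hnormA hSnorm
  have hkey_b : dist (S : Pt) (a : Pt) < dist (S : Pt) (w : Pt) := by
    rw [hwpt]; exact key_b hR hlam hnormA hSnorm.le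
  have hdich : ∀ v : N.V, (N.G.deleteEdges {s(S,w)}).Reachable v S ∨
      (N.G.deleteEdges {s(S,w)}).Reachable v w := by
    intro v
    obtain ⟨p⟩ := N.connected.preconnected v S
    exact walk_dichotomy S w p
  by_cases hcase : (N.G.deleteEdges {s(S,w)}).Reachable a S
  · -- add edge (a, w)
    apply swap_lemma N hlen hac S w a w hadj haw _ hcase (SimpleGraph.Reachable.refl _) hkey_a
    intro hh
    rcases Sym2.eq_iff.mp hh with ⟨h1, -⟩ | ⟨-, h1⟩
    · exact haS h1
    · exact (SimpleGraph.Adj.ne hadj) h1.symm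
  · -- add edge (S, a)
    have hra : (N.G.deleteEdges {s(S,w)}).Reachable a w := (hdich a).resolve_left hcase
    apply swap_lemma N hlen hac S w S a hadj (Ne.symm haS) _
      (SimpleGraph.Reachable.refl _) hra hkey_b
    intro hh
    rcases Sym2.eq_iff.mp hh with ⟨-, h1⟩ | ⟨h1, -⟩
    · exact haw h1
    · exact (SimpleGraph.Adj.ne hadj) h1

end
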